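/- Let ℓ, ℓ_x, k_1, k_2 be naturals with k_1 + k_2 ≤ ℓ and ℓ > ℓ_x + 1, let x be a natural with 2^ℓ − 2^{ℓ_x} < x < 2^ℓ (a negative input) with absolute value ξ := 2^ℓ − x, and let R be any natural with R < 2^ℓ. Let out be the unique natural in [0, 2^{ℓ−k_1−k_2}) congruent to ⌊((x+R) mod 2^ℓ)/2^{k_1}⌋ − ⌊R/2^{k_1}⌋ modulo 2^{ℓ−k_1−k_2}. Then there exists bit ∈ {0,1} such that out ≡ −⌊ξ/2^{k_1}⌋ − bit (mod 2^{ℓ−k_1−k_2}), as a congruence of integers. -/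

import Mathlib

private lemma int_div_add (K a b : ℤ) (hK : K ≠ 0) :
    (a + b) / K = a / K + b / K + (a % K + b % K) / K := by
  conv_lhs => rw [← Int.emod_add_mul_ediv a K, ← Int.emod_add_mul_ediv b K]
  rw [show a % K + K * (a / K) + (b % K + K * (b / K))
      = (a % K + b % K) + (a / K + b / K) * K by ring,
    Int.add_mul_ediv_right _ _ hK]
  ring

private lemma int_carry_bounds (K a b : ℤ) (hK : 0 < K) :
    0 ≤ (a % K + b % K) / K ∧ (a % K + b % K) / K ≤ 1 := by
  have h1 : 0 ≤ a % K := Int.emod_nonneg a hK.ne'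
  have h2 : 0 ≤ b % K := Int.emod_nonneg b hK.ne'
  have h3 : a % K < K := Int.emod_lt_of_pos a hK
  have h4 : b % K < K := Int.emod_lt_of_pos b hK
  constructor
  · exact Int.ediv_nonneg (by omega) hK.le
  · have : (a % K + b % K) / K < 2 := (Int.ediv_lt_iff_lt_mul hK).2 (by omega)
    omega

theorem stmt_11 (ℓ ℓx k₁ k₂ : ℕ) (hk : k₁ + k₂ ≤ ℓ) (hℓ : ℓ > ℓx + 1)
    (x : ℕ) (hx1 : 2 ^ ℓ - 2 ^ ℓx < x) (hx2 : x < 2 ^ ℓ) (R : ℕ) (hR : R < 2 ^ ℓ)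
    (out : ℕ) (hout1 : out < 2 ^ (ℓ - k₁ - k₂))
    (hout2 : Int.ModEq (2 ^ (ℓ - k₁ - k₂)) (out : ℤ)
      ((((x + R) % 2 ^ ℓ / 2 ^ k₁ : ℕ) : ℤ) - ((R / 2 ^ k₁ : ℕ) : ℤ))) :
    ∃ bit : ℕ, bit ≤ 1 ∧
      Int.ModEq (2 ^ (ℓ - k₁ - k₂)) (out : ℤ)
        (-(((2 ^ ℓ - x) / 2 ^ k₁ : ℕ) : ℤ) - (bit : ℤ)) := by
  have hKpos : (0:ℤ) < 2 ^ k₁ := by positivity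
  set K : ℤ := 2 ^ k₁ with hKdef
  set Ξ : ℕ := 2 ^ ℓ - x with hΞdef
  have hxΞ : x + Ξ = 2 ^ ℓ := by omega
  have hΞpos : 0 < Ξ := by omega
  by_cases hcase : Ξ ≤ R
  · -- wrap-around case: (x+R) % 2^ℓ = R - Ξ
    have hmod : (x + R) % 2 ^ ℓ = R - Ξ := by
      have h1 : x + R = 2 ^ ℓ + (R - Ξ) := by omega
      rw [h1, Nat.add_mod_left, Nat.mod_eq_of_lt (by omega)]
    set e : ℤ := (((R:ℤ) - Ξ) % K + (Ξ:ℤ) % K) / K with hedef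
    obtain ⟨he0, he1⟩ := int_carry_bounds K ((R:ℤ) - Ξ) (Ξ:ℤ) hKpos
    have key : (R:ℤ) / K = ((R:ℤ) - Ξ) / K + (Ξ:ℤ) / K + e := by
      have := int_div_add K ((R:ℤ) - Ξ) (Ξ:ℤ) hKpos.ne'
      simpa using this
    refine ⟨e.toNat, by omega, ?_⟩
    have hcast : ((((x + R) % 2 ^ ℓ / 2 ^ k₁ : ℕ)) : ℤ) - ((R / 2 ^ k₁ : ℕ) : ℤ)
        = -((Ξ / 2 ^ k₁ : ℕ) : ℤ) - (e.toNat : ℤ) := by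
      rw [hmod]
      push_cast [Nat.cast_sub hcase, Int.toNat_of_nonneg he0]
      rw [← hKdef]
      omega
    calc (out:ℤ) ≡ _ [ZMOD _] := hout2
      _ = -((Ξ / 2 ^ k₁ : ℕ) : ℤ) - (e.toNat : ℤ) := hcast
  · -- no wrap: (x+R) % 2^ℓ = x + R
    push_neg at hcase
    have hmod : (x + R) % 2 ^ ℓ = x + R := Nat.mod_eq_of_lt (by omega)
    set m : ℕ := Ξ - R with hmdef
    have hm : R + m = Ξ := by omega
    -- over ℤ: x + R = 2^ℓ - m
    set e : ℤ := (((2:ℤ) ^ ℓ - m) % K + (m:ℤ) % K) / K with hedef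
    set e' : ℤ := ((m:ℤ) % K + (R:ℤ) % K) / K with he'def
    obtain ⟨he0, he1⟩ := int_carry_bounds K ((2:ℤ) ^ ℓ - m) (m:ℤ) hKpos
    obtain ⟨he'0, he'1⟩ := int_carry_bounds K (m:ℤ) (R:ℤ) hKpos
    have key1 : (2:ℤ) ^ ℓ / K = ((2:ℤ) ^ ℓ - m) / K + (m:ℤ) / K + e := by
      have := int_div_add K ((2:ℤ) ^ ℓ - m) (m:ℤ) hKpos.ne'
      simpa using this
    have key2 : (Ξ:ℤ) / K = (m:ℤ) / K + (R:ℤ) / K + e' := by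
      have := int_div_add K (m:ℤ) (R:ℤ) hKpos.ne'
      rw [show (m:ℤ) + R = (Ξ:ℤ) by push_cast; omega] at this
      exact this
    -- e' ≤ e
    have hKdvdN : K ∣ (2:ℤ) ^ ℓ := pow_dvd_pow 2 (by omega)
    have hee : e' ≤ e := by
      by_cases hdvd : K ∣ (m:ℤ)
      · have h1 : (m:ℤ) % K = 0 := Int.emod_eq_zero_of_dvd hdvd
        have h2 : e' = 0 := by
          rw [he'def, h1, zero_add]
          exact Int.ediv_eq_zero_of_lt (Int.emod_nonneg _ hKpos.ne') (Int.emod_lt_of_pos _ hKpos)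
        omega
      · -- m % K ≠ 0, so (2^ℓ - m) % K + m % K = K, hence e = 1
        have h1 : (m:ℤ) % K ≠ 0 := fun h => hdvd (Int.dvd_of_emod_eq_zero h)
        have h2 : ((2:ℤ) ^ ℓ - m) % K = K - (m:ℤ) % K := by
          have hmm : 0 ≤ (m:ℤ) % K := Int.emod_nonneg _ hKpos.ne'
          have hmm2 : (m:ℤ) % K < K := Int.emod_lt_of_pos _ hKpos
          obtain ⟨q, hq⟩ := hKdvdN
          have hme := Int.emod_add_mul_ediv (m:ℤ) K
          rw [show (2:ℤ) ^ ℓ - m = (K - (m:ℤ) % K) + (q - (m:ℤ)/K - 1) * K by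
            rw [hq]; linarith, Int.add_mul_emod_self_right,
            Int.emod_eq_of_lt (by omega) (by omega)]
        have h3 : e = 1 := by
          rw [hedef, h2]
          rw [show K - (m:ℤ) % K + (m:ℤ) % K = 1 * K by ring]
          exact Int.mul_ediv_cancel 1 hKpos.ne'
        omega
    refine ⟨(e - e').toNat, by omega, ?_⟩
    have cK : ((2 ^ k₁ : ℕ) : ℤ) = K := by push_cast [hKdef]; ring
    have c1 : (((x + R) % 2 ^ ℓ / 2 ^ k₁ : ℕ) : ℤ) = ((2:ℤ) ^ ℓ - m) / K := by
      rw [hmod, Int.natCast_ediv, cK]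
      congr 1
      have hnat : x + R + m = 2 ^ ℓ := by omega
      have := congrArg (Nat.cast : ℕ → ℤ) hnat
      push_cast at this ⊢
      linarith
    have c2 : ((R / 2 ^ k₁ : ℕ) : ℤ) = (R:ℤ) / K := by rw [Int.natCast_ediv, cK]
    have c3 : ((Ξ / 2 ^ k₁ : ℕ) : ℤ) = (Ξ:ℤ) / K := by rw [Int.natCast_ediv, cK]
    have hcast : ((((x + R) % 2 ^ ℓ / 2 ^ k₁ : ℕ)) : ℤ) - ((R / 2 ^ k₁ : ℕ) : ℤ)
        = (2:ℤ) ^ ℓ / K - ((Ξ / 2 ^ k₁ : ℕ) : ℤ) + e' - e := by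
      rw [c1, c2, c3]
      linarith [key1, key2]
    have hdvdM : ((2:ℤ) ^ (ℓ - k₁ - k₂)) ∣ (2:ℤ) ^ ℓ / K := by
      have h0 : (2:ℤ) ^ ℓ = 2 ^ (ℓ - k₁) * K := by
        rw [hKdef, ← pow_add]
        congr 1
        omega
      have h1 : (2:ℤ) ^ ℓ / K = 2 ^ (ℓ - k₁) := by
        rw [h0, Int.mul_ediv_cancel _ hKpos.ne']
      rw [h1]
      exact pow_dvd_pow 2 (by omega)
    refine hout2.trans ?_
    rw [hcast]
    have hz : ((2:ℤ) ^ ℓ / K) ≡ 0 [ZMOD (2:ℤ) ^ (ℓ - k₁ - k₂)] :=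
      (Int.modEq_zero_iff_dvd).mpr hdvdM
    have hrw : (2:ℤ) ^ ℓ / K - ((Ξ / 2 ^ k₁ : ℕ) : ℤ) + e' - e
        = (2:ℤ) ^ ℓ / K + (-((Ξ / 2 ^ k₁ : ℕ) : ℤ) - ((e - e').toNat : ℤ)) := by
      rw [Int.toNat_of_nonneg (by omega : (0:ℤ) ≤ e - e')]
      ring
    rw [hrw]
    simpa using hz.add_right (-((Ξ / 2 ^ k₁ : ℕ) : ℤ) - ((e - e').toNat : ℤ))
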